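/- Fix Q₀ > 0 and E₀ > 0. For 0 ≤ Ẽ < E₀, let K(Ẽ) = Q₀/(E₀ - Ẽ) and suppose K(Ẽ) ∈ (0, 1/ln 2) so that the RPE power p^e(Ẽ) exists as the unique positive solution of K(Ẽ)·p = log₂(1+p). Then the minimum transmission time T(Ẽ) = (E₀ - Ẽ)/p^e(Ẽ) is strictly increasing in Ẽ. -/

import Mathlib

/-- Strict concavity of `log (1+x)`: for `0 < a < b`, `a * log (1+b) < b * log (1+a)`. -/
lemma key_log_ineq {a b : ℝ} (ha : 0 < a) (hab : a < b) :
    a * Real.log (1 + b) < b * Real.log (1 + a) := by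
  have hb : 0 < b := ha.trans hab
  have hx : (1 : ℝ) ∈ Set.Ioi (0 : ℝ) := by norm_num
  have hy : (1 + b) ∈ Set.Ioi (0 : ℝ) := by simp [Set.mem_Ioi]; linarith
  have hne : (1 : ℝ) ≠ 1 + b := by linarith
  have ht : (0 : ℝ) < 1 - a / b := by
    have : a / b < 1 := (div_lt_one hb).mpr hab
    linarith
  have hs : (0 : ℝ) < a / b := div_pos ha hb
  have hsum : (1 - a / b) + a / b = 1 := by ring
  have h := strictConcaveOn_log_Ioi.2 hx hy hne ht hs hsum
  have hcomb : (1 - a / b) • (1 : ℝ) + (a / b) • (1 + b) = 1 + a := by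
    field_simp
    simp only [smul_eq_mul]; field_simp; ring
  rw [hcomb, Real.log_one, smul_eq_mul, smul_eq_mul, mul_zero, zero_add] at h
  have := (mul_lt_mul_iff_right₀ hb).mpr h
  calc a * Real.log (1 + b) = b * (a / b * Real.log (1 + b)) := by
        field_simp
    _ < b * Real.log (1 + a) := this

theorem min_time_strictMono (E₀ Q₀ : ℝ) (hE₀ : 0 < E₀) (hQ₀ : 0 < Q₀)
    (Et₁ Et₂ p₁ p₂ : ℝ)
    (hEt₁ : 0 ≤ Et₁) (hEt₁' : Et₁ < E₀) (hEt₂ : 0 ≤ Et₂) (hEt₂' : Et₂ < E₀)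
    (hK₁ : Q₀ / (E₀ - Et₁) < 1 / Real.log 2)
    (hK₂ : Q₀ / (E₀ - Et₂) < 1 / Real.log 2)
    (hp₁ : 0 < p₁) (hpe₁ : (Q₀ / (E₀ - Et₁)) * p₁ = Real.logb 2 (1 + p₁))
    (hp₂ : 0 < p₂) (hpe₂ : (Q₀ / (E₀ - Et₂)) * p₂ = Real.logb 2 (1 + p₂))
    (hlt : Et₁ < Et₂) :
    (E₀ - Et₁) / p₁ < (E₀ - Et₂) / p₂ := by
  have hd₁ : 0 < E₀ - Et₁ := by linarith
  have hd₂ : 0 < E₀ - Et₂ := by linarith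
  have hKlt : Q₀ / (E₀ - Et₁) < Q₀ / (E₀ - Et₂) :=
    div_lt_div_of_pos_left hQ₀ hd₂ (by linarith)
  have hlog2 : 0 < Real.log 2 := Real.log_pos (by norm_num)
  -- p₂ < p₁
  have hplt : p₂ < p₁ := by
    by_contra h
    push_neg at h
    rcases eq_or_lt_of_le h with heq | hlt'
    · -- p₁ = p₂ gives K₁ p₁ = K₂ p₂ with equal p, contradicting K₁ < K₂
      rw [heq] at hpe₁
      have := hpe₁.trans hpe₂.symm
      have : Q₀ / (E₀ - Et₁) = Q₀ / (E₀ - Et₂) :=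
        mul_right_cancel₀ (ne_of_gt hp₂) this
      linarith
    · -- p₁ < p₂ : then K₁ = log(1+p₁)/p₁ > log(1+p₂)/p₂ = K₂, contradiction
      have hkey := key_log_ineq hp₁ hlt'
      have hK1 : Q₀ / (E₀ - Et₁) = Real.logb 2 (1 + p₁) / p₁ := by
        field_simp at hpe₁ ⊢
        linarith [hpe₁]
      have hK2 : Q₀ / (E₀ - Et₂) = Real.logb 2 (1 + p₂) / p₂ := by
        field_simp at hpe₂ ⊢
        linarith [hpe₂]
      rw [hK1, hK2] at hKlt
      unfold Real.logb at hKlt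
      rw [div_div, div_div, div_lt_div_iff₀ (by positivity) (by positivity)] at hKlt
      nlinarith [hkey, hlog2]
  -- hence log₂(1+p₂) < log₂(1+p₁), both positive
  have hL₂pos : 0 < Real.logb 2 (1 + p₂) := by
    rw [← hpe₂]; positivity
  have hLlt : Real.logb 2 (1 + p₂) < Real.logb 2 (1 + p₁) := by
    apply Real.logb_lt_logb (by norm_num) (by linarith) (by linarith)
  -- T_i = Q₀ / logb 2 (1+p_i)
  have hT₁ : (E₀ - Et₁) / p₁ = Q₀ / Real.logb 2 (1 + p₁) := by
    rw [← hpe₁]; field_simp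
  have hT₂ : (E₀ - Et₂) / p₂ = Q₀ / Real.logb 2 (1 + p₂) := by
    rw [← hpe₂]; field_simp
  rw [hT₁, hT₂]
  exact div_lt_div_of_pos_left hQ₀ hL₂pos hLlt
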